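/- Let N ∈ ℕ with N ≥ 2 and let γ satisfy the curve hypotheses with parameter N, and set ω := limsup_{t→0⁺} ln|γ(t)|/ln t. Let p, q, r ∈ [1,∞], and suppose there is a constant C such that ‖Tf‖_{L^r_u L^q_x(ℝ²×[1,2])} ≤ C‖f‖_{L^p(ℝ²)} for all f ∈ L^p(ℝ²). Then 1 + (1+ω)(1/q − 1/p) ≥ 0 (with the convention 1/∞ = 0). -/

import Mathlib

open MeasureTheory Filter Set
open scoped ENNReal NNReal

noncomputable section

/-- The averaging operator along the dilated plane curve `(u t, u γ(t))`:
`Tf(x,u) = ∫_0^1 f(x₁ - u t, x₂ - u γ(t)) dt`. -/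
def Tavg (γ : ℝ → ℝ) (f : ℝ × ℝ → ℝ) (x : ℝ × ℝ) (u : ℝ) : ℝ :=
  ∫ t in Set.Ioc (0 : ℝ) 1, f (x.1 - u * t, x.2 - u * γ t)

/-- The curve hypotheses with parameter `N`: `γ ∈ C^N((0,1])`, `γ(t) → 0` as `t → 0⁺`,
`γ` monotonic on `(0,1]`, with the lower bounds (i) for `j = 1,2` and the upper
bounds (ii) for `j = 1,…,N` on `|tʲ γ⁽ʲ⁾(t) / γ(t)|`. -/
def CurveHyp (γ : ℝ → ℝ) (N : ℕ) : Prop :=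
  ContDiffOn ℝ N γ (Set.Ioc 0 1) ∧
  Filter.Tendsto γ (nhdsWithin 0 (Set.Ioi 0)) (nhds 0) ∧
  (MonotoneOn γ (Set.Ioc 0 1) ∨ AntitoneOn γ (Set.Ioc 0 1)) ∧
  (∀ j : ℕ, 1 ≤ j → j ≤ 2 → ∃ C : ℝ, 0 < C ∧ ∀ t ∈ Set.Ioc (0 : ℝ) 1,
    C ≤ |t ^ j * iteratedDerivWithin j γ (Set.Ioc 0 1) t / γ t|) ∧
  (∀ j : ℕ, 1 ≤ j → j ≤ N → ∃ C : ℝ, 0 < C ∧ ∀ t ∈ Set.Ioc (0 : ℝ) 1,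
    |t ^ j * iteratedDerivWithin j γ (Set.Ioc 0 1) t / γ t| ≤ C)

/-- `ω := limsup_{t→0⁺} ln|γ(t)| / ln t`. -/
def curveOmega (γ : ℝ → ℝ) : ℝ :=
  Filter.limsup (fun t => Real.log |γ t| / Real.log t) (nhdsWithin 0 (Set.Ioi 0))

/-- The `L^q(μ)` norm (valued in `ℝ≥0∞`) of an `ℝ≥0∞`-valued function, with the
essential supremum when `q = ∞`. -/
def eLpNormENN {α : Type*} [MeasurableSpace α] (g : α → ℝ≥0∞) (q : ℝ≥0∞)
    (μ : Measure α) : ℝ≥0∞ :=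
  if q = ∞ then essSup g μ else (∫⁻ a, g a ^ q.toReal ∂μ) ^ (1 / q.toReal)


/-- The time-space mixed norm `‖F‖_{L^r_u L^q_x(ℝ² × [1,2])}`. -/
def mixedUX (r q : ℝ≥0∞) (F : ℝ × ℝ → ℝ → ℝ) : ℝ≥0∞ :=
  eLpNormENN (fun u => eLpNorm (fun x => F x u) q (volume : Measure (ℝ × ℝ))) r
    ((volume : Measure ℝ).restrict (Set.Icc 1 2))

lemma le_eLpNormENN_Icc {G : ℝ → ℝ≥0∞} {K r : ℝ≥0∞} (hr : 1 ≤ r)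
    (hG : ∀ u ∈ Set.Icc (1:ℝ) 2, K ≤ G u) :
    K ≤ eLpNormENN G r ((volume : Measure ℝ).restrict (Set.Icc 1 2)) := by
  set μ := (volume : Measure ℝ).restrict (Set.Icc 1 2) with hμdef
  have hμ1 : μ Set.univ = 1 := by
    simp [hμdef, Real.volume_Icc]
    norm_num
  have hμne : μ ≠ 0 := by
    intro h0; rw [h0] at hμ1; simp at hμ1
  have hae : ∀ᵐ u ∂μ, K ≤ G u :=
    (ae_restrict_mem measurableSet_Icc).mono hG
  unfold eLpNormENN
  split_ifs with htop
  · calc K = essSup (fun _ => K) μ := (essSup_const K hμne).symm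
      _ ≤ essSup G μ := essSup_mono_ae hae
  · have hr0 : r ≠ 0 := by intro h0; rw [h0] at hr; simp at hr
    have hρ : 0 < r.toReal := ENNReal.toReal_pos hr0 htop
    calc K = (K ^ r.toReal) ^ (1 / r.toReal) := by
          rw [← ENNReal.rpow_mul, mul_one_div_cancel hρ.ne', ENNReal.rpow_one]
      _ = (∫⁻ _, K ^ r.toReal ∂μ) ^ (1/r.toReal) := by
          rw [lintegral_const, hμ1, mul_one]
      _ ≤ (∫⁻ u, G u ^ r.toReal ∂μ) ^ (1/r.toReal) := by
          refine ENNReal.rpow_le_rpow ?_ (by positivity)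
          exact lintegral_mono_ae (hae.mono fun u hu => ENNReal.rpow_le_rpow hu hρ.le)


lemma curve_ne_zero {γ : ℝ → ℝ} {N : ℕ} (h : CurveHyp γ N) :
    ∀ t ∈ Set.Ioc (0:ℝ) 1, γ t ≠ 0 := by
  obtain ⟨C₁, hC₁pos, hC₁⟩ := h.2.2.2.1 1 le_rfl one_le_two
  intro t ht h0
  have := hC₁ t ht
  rw [h0, div_zero, abs_zero] at this
  linarith

lemma curve_sign {γ : ℝ → ℝ} {N : ℕ} (h : CurveHyp γ N) {δ : ℝ} (hδ : δ ∈ Set.Ioc (0:ℝ) 1) :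
    (∀ t ∈ Set.Ioc (0:ℝ) δ, 0 < γ t ∧ γ t ≤ γ δ) ∨
    (∀ t ∈ Set.Ioc (0:ℝ) δ, γ t < 0 ∧ γ δ ≤ γ t) := by
  have hne := curve_ne_zero h
  rcases h.2.2.1 with hm | hm
  · left
    intro t ht
    have htI : t ∈ Set.Ioc (0:ℝ) 1 := ⟨ht.1, ht.2.trans hδ.2⟩
    have hle : γ t ≤ γ δ := hm htI hδ ht.2
    have h0le : 0 ≤ γ t := by
      refine le_of_tendsto h.2.1 ?_
      filter_upwards [Ioo_mem_nhdsGT_of_mem (⟨le_refl 0, ht.1⟩ : (0:ℝ) ∈ Set.Ico 0 t)]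
        with s hs
      exact hm ⟨hs.1, by linarith [htI.2, hs.2, htI.1]⟩ htI hs.2.le
    exact ⟨lt_of_le_of_ne h0le (Ne.symm (hne t htI)), hle⟩
  · right
    intro t ht
    have htI : t ∈ Set.Ioc (0:ℝ) 1 := ⟨ht.1, ht.2.trans hδ.2⟩
    have hle : γ δ ≤ γ t := hm htI hδ ht.2
    have h0le : γ t ≤ 0 := by
      refine ge_of_tendsto h.2.1 ?_
      filter_upwards [Ioo_mem_nhdsGT_of_mem (⟨le_refl 0, ht.1⟩ : (0:ℝ) ∈ Set.Ico 0 t)]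
        with s hs
      exact hm ⟨hs.1, by linarith [htI.2, hs.2, htI.1]⟩ htI hs.2.le
    exact ⟨lt_of_le_of_ne h0le (hne t htI), hle⟩

lemma curve_ratio_nonneg {γ : ℝ → ℝ} {N : ℕ} (h : CurveHyp γ N) :
    ∀ᶠ t in nhdsWithin (0:ℝ) (Set.Ioi 0), 0 ≤ Real.log |γ t| / Real.log t := by
  have habs : Filter.Tendsto (fun t => |γ t|) (nhdsWithin 0 (Set.Ioi 0)) (nhds 0) := by
    have := h.2.1.abs; simpa using this
  have h1 : ∀ᶠ t in nhdsWithin (0:ℝ) (Set.Ioi 0), |γ t| < 1 :=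
    habs.eventually_lt_const one_pos
  have h2 : ∀ᶠ t in nhdsWithin (0:ℝ) (Set.Ioi 0), t < 1 :=
    eventually_nhdsWithin_of_eventually_nhds (eventually_lt_nhds one_pos)
  filter_upwards [h1, h2, eventually_mem_nhdsWithin] with t h1t h2t h3t
  have hlt : Real.log t < 0 := Real.log_neg h3t h2t
  have hlg : Real.log |γ t| ≤ 0 := Real.log_nonpos (abs_nonneg _) h1t.le
  exact div_nonneg_of_nonpos hlg hlt.le

lemma curve_ratio_bdd {γ : ℝ → ℝ} {N : ℕ} (hN : 2 ≤ N) (h : CurveHyp γ N) :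
    ∃ B : ℝ, ∀ᶠ t in nhdsWithin (0:ℝ) (Set.Ioi 0), Real.log |γ t| / Real.log t ≤ B := by
  obtain ⟨C₂, hC₂pos, hC₂⟩ := h.2.2.2.2 1 le_rfl (by omega)
  have hne := curve_ne_zero h
  -- derivative facts on Ioo 0 1
  have hders : ∀ t ∈ Set.Ioo (0:ℝ) 1,
      HasDerivAt γ (deriv γ t) t ∧ |deriv γ t / γ t| ≤ C₂ / t := by
    intro t ht
    have htI : t ∈ Set.Ioc (0:ℝ) 1 := ⟨ht.1, ht.2.le⟩
    have hnhds : Set.Ioc (0:ℝ) 1 ∈ nhds t := by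
      refine mem_nhds_iff.mpr ⟨Set.Ioo 0 1, Set.Ioo_subset_Ioc_self, isOpen_Ioo, ht⟩
    have hdiffW : DifferentiableWithinAt ℝ γ (Set.Ioc 0 1) t :=
      h.1.differentiableOn (by exact_mod_cast (by omega : N ≠ 0)) t htI
    have hdiffAt : DifferentiableAt ℝ γ t := hdiffW.differentiableAt hnhds
    refine ⟨hdiffAt.hasDerivAt, ?_⟩
    have hiDW : iteratedDerivWithin 1 γ (Set.Ioc 0 1) t = deriv γ t := by
      rw [iteratedDerivWithin_one,
        derivWithin_of_mem_nhds hnhds]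
    have hb := hC₂ t htI
    rw [hiDW, pow_one] at hb
    have : |t * deriv γ t / γ t| = t * |deriv γ t / γ t| := by
      rw [mul_div_assoc, abs_mul, abs_of_pos ht.1]
    rw [this] at hb
    rw [div_eq_mul_inv C₂, mul_comm C₂]
    calc |deriv γ t / γ t| = t⁻¹ * (t * |deriv γ t / γ t|) := by
          rw [← mul_assoc, inv_mul_cancel₀ (ne_of_gt ht.1), one_mul]
      _ ≤ t⁻¹ * C₂ := mul_le_mul_of_nonneg_left hb (inv_nonneg.mpr ht.1.le)
  set G : ℝ → ℝ := fun t => Real.log (γ t) - C₂ * Real.log t with hGdef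
  have HG : ∀ t ∈ Set.Ioo (0:ℝ) 1, HasDerivAt G (deriv γ t / γ t - C₂ * t⁻¹) t := by
    intro t ht
    have h1 := (hders t ht).1.log (hne t ⟨ht.1, ht.2.le⟩)
    have h2 := (Real.hasDerivAt_log (ne_of_gt ht.1)).const_mul C₂
    exact h1.sub h2
  have Ganti : AntitoneOn G (Set.Ioo 0 1) := by
    refine antitoneOn_of_deriv_nonpos (convex_Ioo 0 1)
      (fun t ht => (HG t ht).continuousAt.continuousWithinAt) ?_ ?_
    · rw [interior_Ioo]
      exact fun t ht => (HG t ht).differentiableAt.differentiableWithinAt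
    · rw [interior_Ioo]
      intro t ht
      rw [(HG t ht).deriv]
      have hb := (hders t ht).2
      have : deriv γ t / γ t ≤ C₂ / t := le_trans (le_abs_self _) hb
      rw [div_eq_mul_inv C₂, mul_comm C₂] at this
      rw [mul_comm C₂]
      linarith
  set B : ℝ := G (1/2) with hBdef
  refine ⟨C₂ + 1, ?_⟩
  have h2 : ∀ᶠ t in nhdsWithin (0:ℝ) (Set.Ioi 0), t < min (1/2) (Real.exp (-(|B|+1))) := by
    refine eventually_nhdsWithin_of_eventually_nhds (eventually_lt_nhds ?_)
    positivity
  filter_upwards [h2, eventually_mem_nhdsWithin] with t h2t h3t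
  have ht0 : (0:ℝ) < t := h3t
  have ht12 : t < 1/2 := lt_of_lt_of_le h2t (min_le_left _ _)
  have htexp : t < Real.exp (-(|B|+1)) := lt_of_lt_of_le h2t (min_le_right _ _)
  have hlogt : Real.log t < -(|B|+1) := by
    calc Real.log t < Real.log (Real.exp (-(|B|+1))) := Real.log_lt_log ht0 htexp
      _ = -(|B|+1) := Real.log_exp _
  have hlogt0 : Real.log t < 0 := by linarith [abs_nonneg B]
  -- G t ≥ B
  have hGB : B ≤ G t := by
    refine Ganti ⟨ht0, by linarith⟩ (by norm_num) ht12.le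
  -- log |γ t| = log (γ t)
  have hlabs : Real.log |γ t| = Real.log (γ t) := Real.log_abs _
  have hlow : B + C₂ * Real.log t ≤ Real.log (γ t) := by
    have : Real.log (γ t) - C₂ * Real.log t = G t := rfl
    linarith [hGB]
  rw [hlabs]
  rw [div_le_iff_of_neg hlogt0]
  -- goal : (C₂ + 1) * log t ≤ log (γ t)
  have hB : -|B| ≤ B := neg_abs_le B
  nlinarith [hlogt, hlow, abs_nonneg B]


lemma perDelta {γ : ℝ → ℝ} (hcont : ContinuousOn γ (Set.Ioc 0 1))
    {p q r : ℝ≥0∞} (hq : 1 ≤ q) (hr : 1 ≤ r) {C : ℝ}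
    (hbdd : ∀ f : ℝ × ℝ → ℝ, MemLp f p volume →
      mixedUX r q (Tavg γ f) ≤ ENNReal.ofReal C * eLpNorm f p volume)
    {δ : ℝ} (hδ0 : 0 < δ) (hδ1 : δ ≤ 1)
    {R S : Set (ℝ × ℝ)} (hR : MeasurableSet R) (hS : MeasurableSet S)
    (hRvol : volume R ≠ ∞) (hSvol : volume S ≠ 0)
    (hmem : ∀ t ∈ Set.Ioc (0:ℝ) δ, ∀ u ∈ Set.Icc (1:ℝ) 2, ∀ x ∈ S,
      ((x : ℝ × ℝ).1 - u * t, x.2 - u * γ t) ∈ R) :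
    ENNReal.ofReal δ * volume S ^ (1/q.toReal) ≤
      ENNReal.ofReal C * volume R ^ (1/p.toReal) := by
  classical
  set f : ℝ × ℝ → ℝ := R.indicator (fun _ => (1:ℝ)) with hfdef
  have hfmem : MemLp f p volume := memLp_indicator_const p hR 1 (Or.inr hRvol)
  have hq0 : q ≠ 0 := by intro h0; rw [h0] at hq; simp at hq
  -- pointwise lower bound
  have key : ∀ u ∈ Set.Icc (1:ℝ) 2, ∀ x ∈ S, δ ≤ Tavg γ f x u := by
    intro u hu x hx
    set ψ : ℝ → ℝ × ℝ := fun t => (x.1 - u * t, x.2 - u * γ t) with hψdef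
    have hγm : AEMeasurable γ ((volume : Measure ℝ).restrict (Set.Ioc 0 1)) :=
      hcont.aemeasurable measurableSet_Ioc
    have hψm : AEMeasurable ψ ((volume : Measure ℝ).restrict (Set.Ioc 0 1)) := by
      refine AEMeasurable.prodMk ?_ ?_
      · exact (aemeasurable_const.sub (aemeasurable_const.mul aemeasurable_id))
      · exact (aemeasurable_const.sub (aemeasurable_const.mul hγm))
    have hfme : Measurable f := measurable_const.indicator hR
    have hfm : AEStronglyMeasurable (fun t => f (ψ t))
        ((volume : Measure ℝ).restrict (Set.Ioc 0 1)) :=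
      (hfme.comp_aemeasurable hψm).aestronglyMeasurable
    have hbd : ∀ t, ‖f (ψ t)‖ ≤ 1 := by
      intro t
      by_cases hmem' : ψ t ∈ R <;> simp [hfdef, Set.indicator, hmem']
    have hint : IntegrableOn (fun t => f (ψ t)) (Set.Ioc 0 1) volume := by
      refine Integrable.mono' (g := fun _ => (1:ℝ)) ?_ hfm (ae_of_all _ hbd)
      rw [integrable_const_iff]
      right
      exact isFiniteMeasure_restrict.2 (by simp [Real.volume_Ioc])
    have hnn : 0 ≤ᵐ[(volume : Measure ℝ).restrict (Set.Ioc 0 1)] fun t => f (ψ t) :=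
      ae_of_all _ (fun t => Set.indicator_nonneg (fun _ _ => zero_le_one) _)
    have h1 : ∫ t in Set.Ioc (0:ℝ) δ, f (ψ t) ≤ ∫ t in Set.Ioc (0:ℝ) 1, f (ψ t) := by
      refine setIntegral_mono_set hint hnn ?_
      exact HasSubset.Subset.eventuallyLE (Set.Ioc_subset_Ioc_right hδ1)
    have h2 : ∫ t in Set.Ioc (0:ℝ) δ, f (ψ t) = δ := by
      rw [setIntegral_congr_fun measurableSet_Ioc
        (fun t ht => Set.indicator_of_mem (hmem t ht u hu x hx) _)]
      simp [Real.volume_Ioc, hδ0.le]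
    have : Tavg γ f x u = ∫ t in Set.Ioc (0:ℝ) 1, f (ψ t) := rfl
    rw [this]; linarith
  -- inner eLpNorm lower bound
  have inner : ∀ u ∈ Set.Icc (1:ℝ) 2,
      ENNReal.ofReal δ * volume S ^ (1/q.toReal) ≤
        eLpNorm (fun x => Tavg γ f x u) q volume := by
    intro u hu
    have hres : (volume : Measure (ℝ × ℝ)).restrict S ≠ 0 := by
      rw [Ne, Measure.restrict_eq_zero]; exact hSvol
    calc ENNReal.ofReal δ * volume S ^ (1/q.toReal)
        = eLpNorm (fun _ : ℝ × ℝ => δ) q ((volume : Measure (ℝ × ℝ)).restrict S) := by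
          rw [eLpNorm_const _ hq0 hres, Measure.restrict_apply_univ,
            Real.enorm_eq_ofReal hδ0.le]
      _ ≤ eLpNorm (fun x => Tavg γ f x u) q ((volume : Measure (ℝ × ℝ)).restrict S) := by
          refine eLpNorm_mono_ae (((ae_restrict_mem hS).mono fun x hx => ?_))
          rw [Real.norm_of_nonneg hδ0.le]
          exact le_trans (key u hu x hx) (le_abs_self _)
      _ ≤ eLpNorm (fun x => Tavg γ f x u) q volume :=
          eLpNorm_mono_measure _ Measure.restrict_le_self
  have step3 : ENNReal.ofReal δ * volume S ^ (1/q.toReal) ≤ mixedUX r q (Tavg γ f) :=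
    le_eLpNormENN_Icc hr inner
  have step4 : eLpNorm f p volume ≤ volume R ^ (1/p.toReal) := by
    have := eLpNorm_indicator_const_le (s := R) (μ := (volume : Measure (ℝ × ℝ))) (1:ℝ) p
    simpa using this
  calc ENNReal.ofReal δ * volume S ^ (1/q.toReal) ≤ mixedUX r q (Tavg γ f) := step3
    _ ≤ ENNReal.ofReal C * eLpNorm f p volume := hbdd f hfmem
    _ ≤ ENNReal.ofReal C * volume R ^ (1/p.toReal) := by
        exact mul_le_mul_right step4 _


/-- the per-δ inequality, in real-number form -/
lemma perDeltaReal {γ : ℝ → ℝ} {N : ℕ} (hN : 2 ≤ N) (h : CurveHyp γ N)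
    {p q r : ℝ≥0∞} (hq : 1 ≤ q) (hr : 1 ≤ r) {C : ℝ} (hC : 0 ≤ C)
    (hbdd : ∀ f : ℝ × ℝ → ℝ, MemLp f p volume →
      mixedUX r q (Tavg γ f) ≤ ENNReal.ofReal C * eLpNorm f p volume)
    {δ : ℝ} (hδ0 : 0 < δ) (hδ1 : δ ≤ 1) :
    δ * (4 * (δ * |γ δ|)) ^ (q⁻¹).toReal ≤ C * (16 * (δ * |γ δ|)) ^ (p⁻¹).toReal := by
  have hcont : ContinuousOn γ (Set.Ioc 0 1) := h.1.continuousOn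
  have hγne : γ δ ≠ 0 := curve_ne_zero h δ ⟨hδ0, hδ1⟩
  have hm0 : 0 < δ * |γ δ| := mul_pos hδ0 (abs_pos.mpr hγne)
  set g := γ δ with hgdef
  -- construct rectangles according to sign
  have key : ENNReal.ofReal δ * (ENNReal.ofReal (4 * (δ * |g|))) ^ (1/q.toReal) ≤
      ENNReal.ofReal C * (ENNReal.ofReal (16 * (δ * |g|))) ^ (1/p.toReal) := by
    rcases curve_sign h (⟨hδ0, hδ1⟩ : δ ∈ Set.Ioc (0:ℝ) 1) with hsgn | hsgn
    · have hg0 : 0 < g := (hsgn δ ⟨hδ0, le_refl δ⟩).1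
      have habs : |g| = g := abs_of_pos hg0
      set R : Set (ℝ × ℝ) := Set.Icc 0 (4*δ) ×ˢ Set.Icc 0 (4*g) with hRdef
      set S : Set (ℝ × ℝ) := Set.Icc (2*δ) (4*δ) ×ˢ Set.Icc (2*g) (4*g) with hSdef
      have hvolR : volume R = ENNReal.ofReal (16 * (δ * |g|)) := by
        rw [hRdef, Measure.volume_eq_prod, Measure.prod_prod, Real.volume_Icc,
          Real.volume_Icc, ← ENNReal.ofReal_mul (by linarith), habs]
        ring_nf
      have hvolS : volume S = ENNReal.ofReal (4 * (δ * |g|)) := by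
        rw [hSdef, Measure.volume_eq_prod, Measure.prod_prod, Real.volume_Icc,
          Real.volume_Icc, ← ENNReal.ofReal_mul (by linarith), habs]
        ring_nf
      rw [← hvolR, ← hvolS]
      refine perDelta hcont hq hr hbdd hδ0 hδ1
        (measurableSet_Icc.prod measurableSet_Icc)
        (measurableSet_Icc.prod measurableSet_Icc)
        (by rw [hvolR]; exact ENNReal.ofReal_ne_top)
        (by rw [hvolS]; exact (ENNReal.ofReal_pos.mpr (by positivity)).ne') ?_
      intro t ht u hu x hx
      obtain ⟨hγt0, hγtle⟩ := hsgn t ht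
      simp only [hSdef, hRdef, Set.mem_prod, Set.mem_Icc] at hx ⊢
      obtain ⟨⟨hx11, hx12⟩, hx21, hx22⟩ := hx
      obtain ⟨ht0, htδ⟩ := ht
      obtain ⟨hu1, hu2⟩ := hu
      have h1 : u * t ≤ 2 * δ := by nlinarith
      have h2 : 0 < u * t := by nlinarith
      have h3 : u * γ t ≤ 2 * g := by nlinarith
      have h4 : 0 < u * γ t := by nlinarith
      exact ⟨⟨by linarith, by linarith⟩, by linarith, by linarith⟩
    · have hg0 : g < 0 := (hsgn δ ⟨hδ0, le_refl δ⟩).1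
      have habs : |g| = -g := abs_of_neg hg0
      set R : Set (ℝ × ℝ) := Set.Icc 0 (4*δ) ×ˢ Set.Icc (4*g) 0 with hRdef
      set S : Set (ℝ × ℝ) := Set.Icc (2*δ) (4*δ) ×ˢ Set.Icc (4*g) (2*g) with hSdef
      have hvolR : volume R = ENNReal.ofReal (16 * (δ * |g|)) := by
        rw [hRdef, Measure.volume_eq_prod, Measure.prod_prod, Real.volume_Icc,
          Real.volume_Icc, ← ENNReal.ofReal_mul (by linarith), habs]
        ring_nf
      have hvolS : volume S = ENNReal.ofReal (4 * (δ * |g|)) := by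
        rw [hSdef, Measure.volume_eq_prod, Measure.prod_prod, Real.volume_Icc,
          Real.volume_Icc, ← ENNReal.ofReal_mul (by linarith), habs]
        ring_nf
      rw [← hvolR, ← hvolS]
      refine perDelta hcont hq hr hbdd hδ0 hδ1
        (measurableSet_Icc.prod measurableSet_Icc)
        (measurableSet_Icc.prod measurableSet_Icc)
        (by rw [hvolR]; exact ENNReal.ofReal_ne_top)
        (by rw [hvolS]; exact (ENNReal.ofReal_pos.mpr (by positivity)).ne') ?_
      intro t ht u hu x hx
      obtain ⟨hγt0, hγtle⟩ := hsgn t ht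
      simp only [hSdef, hRdef, Set.mem_prod, Set.mem_Icc] at hx ⊢
      obtain ⟨⟨hx11, hx12⟩, hx21, hx22⟩ := hx
      obtain ⟨ht0, htδ⟩ := ht
      obtain ⟨hu1, hu2⟩ := hu
      have h1 : u * t ≤ 2 * δ := by nlinarith
      have h2 : 0 < u * t := by nlinarith
      have h3 : 2 * g ≤ u * γ t := by nlinarith
      have h4 : u * γ t < 0 := by nlinarith
      exact ⟨⟨by linarith, by linarith⟩, by linarith, by linarith⟩
  -- convert to real form
  have e1 : (1:ℝ)/q.toReal = (q⁻¹).toReal := by rw [one_div, ← ENNReal.toReal_inv]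
  have e2 : (1:ℝ)/p.toReal = (p⁻¹).toReal := by rw [one_div, ← ENNReal.toReal_inv]
  rw [e1, e2, ENNReal.ofReal_rpow_of_pos (by positivity),
    ENNReal.ofReal_rpow_of_pos (by positivity),
    ← ENNReal.ofReal_mul hδ0.le, ← ENNReal.ofReal_mul hC] at key
  exact (ENNReal.ofReal_le_ofReal_iff (by positivity)).mp key


/-- Theorem 1.5, necessary condition (II): if the time-space estimate
`L^p_x → L^r_u L^q_x` holds for `T`, then `1 + (1+ω)(1/q - 1/p) ≥ 0`. -/
theorem timeSpace_necessity_II (N : ℕ) (hN : 2 ≤ N) (γ : ℝ → ℝ) (h : CurveHyp γ N)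
    (p q r : ℝ≥0∞) (hp : 1 ≤ p) (hq : 1 ≤ q) (hr : 1 ≤ r)
    (hbdd : ∃ C : ℝ, ∀ f : ℝ × ℝ → ℝ, MemLp f p volume →
      mixedUX r q (Tavg γ f) ≤ ENNReal.ofReal C * eLpNorm f p volume) :
    0 ≤ 1 + (1 + curveOmega γ) * ((q⁻¹).toReal - (p⁻¹).toReal) := by
  obtain ⟨C, hC⟩ := hbdd
  have hbdd' : ∀ f : ℝ × ℝ → ℝ, MemLp f p volume →
      mixedUX r q (Tavg γ f) ≤ ENNReal.ofReal |C| * eLpNorm f p volume := by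
    intro f hf
    exact (hC f hf).trans
      (mul_le_mul_left (ENNReal.ofReal_le_ofReal (le_abs_self C)) _)
  set ω := curveOmega γ with hωdef
  set α := (q⁻¹).toReal with hαdef
  set β := (p⁻¹).toReal with hβdef
  have hα0 : 0 ≤ α := ENNReal.toReal_nonneg
  have hβ0 : 0 ≤ β := ENNReal.toReal_nonneg
  have hβ1 : β ≤ 1 := by
    rw [hβdef]
    calc (p⁻¹).toReal ≤ (1 : ℝ≥0∞).toReal :=
          ENNReal.toReal_mono (by simp) (ENNReal.inv_le_one.mpr hp)
      _ = 1 := by simp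
  -- limsup facts
  obtain ⟨B, hB⟩ := curve_ratio_bdd hN h
  have hbound : IsBoundedUnder (· ≤ ·) (nhdsWithin (0:ℝ) (Set.Ioi 0))
      (fun t => Real.log |γ t| / Real.log t) := ⟨B, hB⟩
  have hcobound : IsCoboundedUnder (· ≤ ·) (nhdsWithin (0:ℝ) (Set.Ioi 0))
      (fun t => Real.log |γ t| / Real.log t) :=
    IsBoundedUnder.isCoboundedUnder_le ⟨0, (curve_ratio_nonneg h).mono (fun t ht => ht)⟩
  have hω0 : 0 ≤ ω :=
    le_limsup_of_frequently_le ((curve_ratio_nonneg h).frequently) hbound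
  by_contra hcon
  push_neg at hcon
  set s : ℝ := α - β with hsdef
  have hcon' : 1 + (1 + ω) * s < 0 := hcon
  have hs : s < 0 := by nlinarith
  have hs0 : s ≠ 0 := ne_of_lt hs
  set ε : ℝ := (1 + (1 + ω) * s) / (2 * s) with hεdef
  have hε : 0 < ε := div_pos_of_neg_of_neg (by linarith) (by linarith)
  clear_value s ε
  have hsε : s * ε = (1 + (1 + ω) * s) / 2 := by
    rw [hεdef]; field_simp
  set e : ℝ := 1 + s * (1 + ω - ε) with hedef
  have he : e < 0 := by
    have hexp : s * (1 + ω - ε) = s * (1 + ω) - s * ε := by ring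
    have hcomm : s * (1 + ω) = (1 + ω) * s := mul_comm _ _
    rw [hedef, hexp, hsε]; linarith
  -- frequently the log-ratio is close to ω
  have hfreq : ∃ᶠ t in nhdsWithin (0:ℝ) (Set.Ioi 0),
      ω - ε < Real.log |γ t| / Real.log t :=
    frequently_lt_of_lt_limsup hcobound (by rw [hωdef]; unfold curveOmega; linarith [hε])
  -- eventually δ is small and δ^e is large
  have htend : Tendsto (fun t : ℝ => t ^ e) (nhdsWithin (0:ℝ) (Set.Ioi 0)) atTop := by
    have h1 : Tendsto (fun t : ℝ => (t⁻¹) ^ (-e)) (nhdsWithin (0:ℝ) (Set.Ioi 0)) atTop :=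
      (tendsto_rpow_atTop (by linarith)).comp tendsto_inv_nhdsGT_zero
    refine h1.congr' ?_
    filter_upwards [eventually_mem_nhdsWithin] with t ht
    have ht0 : (0:ℝ) < t := ht
    rw [Real.inv_rpow ht0.le, Real.rpow_neg ht0.le, inv_inv]
  have heve : ∀ᶠ t in nhdsWithin (0:ℝ) (Set.Ioi 0),
      0 < t ∧ t < 1 ∧ 16 * |C| < t ^ e := by
    have h1 : ∀ᶠ t in nhdsWithin (0:ℝ) (Set.Ioi 0), t < 1 :=
      eventually_nhdsWithin_of_eventually_nhds (eventually_lt_nhds one_pos)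
    filter_upwards [eventually_mem_nhdsWithin, h1, htend.eventually_gt_atTop (16 * |C|)]
      with t ht h1t h2t
    exact ⟨ht, h1t, h2t⟩
  obtain ⟨δ, hδfreq, hδ0, hδ1, hδe⟩ := (hfreq.and_eventually heve).exists
  -- the chosen δ
  have hγδne : γ δ ≠ 0 := curve_ne_zero h δ ⟨hδ0, hδ1.le⟩
  have hγabs : 0 < |γ δ| := abs_pos.mpr hγδne
  have hlogδ : Real.log δ < 0 := Real.log_neg hδ0 hδ1
  have hγbound : |γ δ| < δ ^ (ω - ε) := by
    rw [lt_div_iff_of_neg hlogδ] at hδfreq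
    have : Real.log |γ δ| < Real.log (δ ^ (ω - ε)) := by
      rw [Real.log_rpow hδ0]; linarith
    calc |γ δ| = Real.exp (Real.log |γ δ|) := (Real.exp_log hγabs).symm
      _ < Real.exp (Real.log (δ ^ (ω - ε))) := Real.exp_lt_exp.mpr this
      _ = δ ^ (ω - ε) := Real.exp_log (Real.rpow_pos_of_pos hδ0 _)
  set m : ℝ := δ * |γ δ| with hmdef
  have hm0 : 0 < m := mul_pos hδ0 hγabs
  have hkey := perDeltaReal hN h hq hr (abs_nonneg C) hbdd' hδ0 hδ1.le
  rw [← hmdef, ← hαdef, ← hβdef] at hkey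
  -- hkey : δ * (4*m)^α ≤ |C| * (16*m)^β
  have h16 : (16 * m) ^ β ≤ 16 * m ^ β := by
    rw [Real.mul_rpow (by norm_num) hm0.le]
    have h16b : (16:ℝ) ^ β ≤ 16 := by
      calc (16:ℝ) ^ β ≤ (16:ℝ) ^ (1:ℝ) :=
            Real.rpow_le_rpow_of_exponent_le (by norm_num) hβ1
        _ = 16 := Real.rpow_one 16
    nlinarith [Real.rpow_nonneg hm0.le β]
  have h4 : m ^ α ≤ (4 * m) ^ α :=
    Real.rpow_le_rpow hm0.le (by linarith) hα0
  have hA : δ * m ^ α ≤ 16 * |C| * m ^ β := by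
    calc δ * m ^ α ≤ δ * (4 * m) ^ α := mul_le_mul_of_nonneg_left h4 hδ0.le
      _ ≤ |C| * (16 * m) ^ β := hkey
      _ ≤ |C| * (16 * m ^ β) := mul_le_mul_of_nonneg_left h16 (abs_nonneg C)
      _ = 16 * |C| * m ^ β := by ring
  have hmαpos : (0:ℝ) < m ^ α := Real.rpow_pos_of_pos hm0 α
  have hdiv : δ ≤ 16 * |C| * m ^ (β - α) := by
    have hsplit : m ^ β = m ^ (β - α) * m ^ α := by
      rw [← Real.rpow_add hm0]; ring_nf
    rw [hsplit] at hA
    have := le_of_mul_le_mul_right (by linarith [hA] :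
      δ * m ^ α ≤ (16 * |C| * m ^ (β - α)) * m ^ α) hmαpos
    exact this
  have hmle : m ≤ δ ^ (1 + (ω - ε)) := by
    have : m ≤ δ * δ ^ (ω - ε) :=
      mul_le_mul_of_nonneg_left hγbound.le hδ0.le
    calc m ≤ δ * δ ^ (ω - ε) := this
      _ = δ ^ (1 + (ω - ε)) := by
        rw [Real.rpow_add hδ0, Real.rpow_one]
  set X : ℝ := (1 + (ω - ε)) * (β - α) with hXdef
  have heX : e = 1 - X := by rw [hedef, hXdef, hsdef]; ring
  have hstep : m ^ (β - α) ≤ δ ^ X := by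
    calc m ^ (β - α) ≤ (δ ^ (1 + (ω - ε))) ^ (β - α) :=
          Real.rpow_le_rpow hm0.le hmle (by linarith)
      _ = δ ^ X := by rw [hXdef, ← Real.rpow_mul hδ0.le]
  have hfin : δ ≤ 16 * |C| * δ ^ X := by
    calc δ ≤ 16 * |C| * m ^ (β - α) := hdiv
      _ ≤ 16 * |C| * δ ^ X :=
          mul_le_mul_of_nonneg_left hstep (by positivity)
  -- multiply by δ^(-X)
  have hδXpos : (0:ℝ) < δ ^ (-X) := Real.rpow_pos_of_pos hδ0 _
  have hfin2 : δ ^ e ≤ 16 * |C| := by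
    have h1 := mul_le_mul_of_nonneg_right hfin hδXpos.le
    have h2 : δ * δ ^ (-X) = δ ^ e := by
      rw [heX]
      calc δ * δ ^ (-X) = δ ^ (1:ℝ) * δ ^ (-X) := by rw [Real.rpow_one]
        _ = δ ^ (1 - X) := by rw [← Real.rpow_add hδ0]; ring_nf
    have h3 : 16 * |C| * δ ^ X * δ ^ (-X) = 16 * |C| := by
      rw [mul_assoc, ← Real.rpow_add hδ0]
      simp
    rw [h2, h3] at h1
    exact h1
  linarith [hδe, hfin2]


end
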